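/- Let T be a light tournament, let X = (X_1, …, X_ℓ) be a C₃-chain in T, and let C be the set of clear vertices with respect to X. If the induced subtournament T[C] contains a directed triangle, then T contains a C₃-chain of length ℓ+1. -/
import Mathlib


/-- A tournament on a vertex type `V`: for every two distinct vertices exactly one
of the two possible arcs is present, and there are no loops. -/
structure Tournament (V : Type) where
  arc : V → V → Prop
  asymm : ∀ u v, arc u v → ¬ arc v u
  total : ∀ u v, u ≠ v → arc u v ∨ arc v u

namespace Tournament

variable {V : Type}

/-- A set of vertices is transitive (acyclic) if it contains no directed triangle. -/
def IsTransitiveSet (T : Tournament V) (S : Set V) : Prop :=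
  ∀ a ∈ S, ∀ b ∈ S, ∀ c ∈ S, ¬ (T.arc a b ∧ T.arc b c ∧ T.arc c a)

/-- Out-neighborhood `N⁺(v)`. -/
def outN (T : Tournament V) (v : V) : Set V := {w | T.arc v w}

/-- In-neighborhood `N⁻(v)`. -/
def inN (T : Tournament V) (v : V) : Set V := {w | T.arc w v}

/-- Arc neighborhood `N(uv)` of an arc `u → v`: vertices forming a directed
triangle with the arc. -/
def arcNbhd (T : Tournament V) (u v : V) : Set V := {w | T.arc v w ∧ T.arc w u}

/-- `T.ColorableOn S k` means the induced subtournament `T[S]` can be partitioned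
into at most `k` transitive sets. -/
def ColorableOn (T : Tournament V) (S : Set V) (k : ℕ) : Prop :=
  ∃ f : V → ℕ, (∀ v ∈ S, f v < k) ∧ ∀ i : ℕ, T.IsTransitiveSet {v | v ∈ S ∧ f v = i}

/-- The dichromatic number of `T`: the least `k` such that `V(T)` can be
partitioned into `k` transitive sets. -/
noncomputable def dichromaticNumber (T : Tournament V) : ℕ :=
  sInf {k | T.ColorableOn Set.univ k}

/-- An arc `u → v` is heavy if `N(uv)` contains a directed triangle. -/
def IsHeavy (T : Tournament V) (u v : V) : Prop :=
  T.arc u v ∧ ∃ a b c,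
    a ∈ T.arcNbhd u v ∧ b ∈ T.arcNbhd u v ∧ c ∈ T.arcNbhd u v ∧
    T.arc a b ∧ T.arc b c ∧ T.arc c a

/-- A tournament is light if it has no heavy arc. -/
def IsLight (T : Tournament V) : Prop := ∀ u v, ¬ T.IsHeavy u v

/-- The induced subtournament `T[S]` is light: for every arc within `S`, the part
of its arc neighborhood inside `S` is transitive. -/
def LightOn (T : Tournament V) (S : Set V) : Prop :=
  ∀ u ∈ S, ∀ v ∈ S, T.arc u v → T.IsTransitiveSet (T.arcNbhd u v ∩ S)

/-- `S` is the vertex set of a directed triangle. -/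
def IsTriangle (T : Tournament V) (S : Set V) : Prop :=
  ∃ a b c, S = {a, b, c} ∧ T.arc a b ∧ T.arc b c ∧ T.arc c a

/-- `S ⇒ U`: every arc between `S` and `U` is directed from `S` to `U`. -/
def Beats (T : Tournament V) (S U : Set V) : Prop :=
  ∀ s ∈ S, ∀ u ∈ U, T.arc s u

/-- `X 0, …, X (L-1)` is a `C₃`-chain of length `L`: pairwise vertex-disjoint
directed triangles with `X i ⇒ X (i+1)`. -/
def IsC3Chain (T : Tournament V) (X : ℕ → Set V) (L : ℕ) : Prop :=
  (∀ i < L, T.IsTriangle (X i)) ∧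
  (∀ i < L, ∀ j < L, i ≠ j → Disjoint (X i) (X j)) ∧
  (∀ i, i + 1 < L → T.Beats (X i) (X (i + 1)))

/-- `v 0, …, v k` are the vertices of a shortest directed path from `v 0` to `v k`:
consecutive arcs are present, and no directed path (walk) from `v 0` to `v k`
has fewer than `k` arcs. -/
def IsShortestPath (T : Tournament V) (v : ℕ → V) (k : ℕ) : Prop :=
  (∀ i < k, T.arc (v i) (v (i + 1))) ∧
  (∀ m : ℕ, ∀ p : ℕ → V, p 0 = v 0 → p m = v k →
    (∀ i < m, T.arc (p i) (p (i + 1))) → k ≤ m)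

/-- The path decomposition `D 0, …, D (k+1)` associated to the path `v 0, …, v k`:
`D 0 = N⁺(v 0)`, `D i = N(e i) \ (D 0 ∪ ⋯ ∪ D (i-1))` for `1 ≤ i ≤ k` where
`e i` is the arc `v (i-1) → v i`, and `D (k+1) = N⁻(v k) \ (D 0 ∪ ⋯ ∪ D k)`. -/
def PathDecomp (T : Tournament V) (v : ℕ → V) (k : ℕ) (D : ℕ → Set V) : Prop :=
  D 0 = T.outN (v 0) ∧
  (∀ i, 1 ≤ i → i ≤ k → D i = T.arcNbhd (v (i - 1)) (v i) \ ⋃ j < i, D j) ∧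
  D (k + 1) = T.inN (v k) \ ⋃ j < k + 1, D j

end Tournament

theorem stmt_14 {V : Type} [Fintype V] (T : Tournament V) (hlight : T.IsLight)
    (L : ℕ) (X : ℕ → Set V) (hchain : T.IsC3Chain X L)
    (C : Set V)
    (hC : C = {w | (∀ i < L, w ∉ X i) ∧
      ∀ i < L, (∀ x ∈ X i, T.arc w x) ∨ (∀ x ∈ X i, T.arc x w)})
    (htri : ∃ a ∈ C, ∃ b ∈ C, ∃ c ∈ C, T.arc a b ∧ T.arc b c ∧ T.arc c a) :
    ∃ Y : ℕ → Set V, T.IsC3Chain Y (L + 1) := by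
  classical
  subst hC
  obtain ⟨a, ha, b, hb, c, hc, hab, hbc, hca⟩ := htri
  simp only [Set.mem_setOf_eq] at ha hb hc
  obtain ⟨ha1, ha2⟩ := ha
  obtain ⟨hb1, hb2⟩ := hb
  obtain ⟨hc1, hc2⟩ := hc
  set Y : Set V := {a, b, c} with hYdef
  obtain ⟨htriX, hdisjX, hbeatsX⟩ := hchain
  have heavyAux : ∀ i < L, ∀ u w : V, T.arc w u → (∀ x ∈ X i, T.arc u x) →
      (∀ x ∈ X i, T.arc x w) → False := by
    intro i hi u w hwu hu hw
    obtain ⟨p, q, r, hXe, hpq, hqr, hrp⟩ := htriX i hi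
    have hp : p ∈ X i := by rw [hXe]; simp
    have hq : q ∈ X i := by rw [hXe]; simp
    have hr : r ∈ X i := by rw [hXe]; simp
    exact hlight w u ⟨hwu, p, q, r, ⟨hu p hp, hw p hp⟩, ⟨hu q hq, hw q hq⟩,
      ⟨hu r hr, hw r hr⟩, hpq, hqr, hrp⟩
  have memY : ∀ y ∈ Y, y = a ∨ y = b ∨ y = c := by
    intro y hy; simpa [hYdef] using hy
  have uni : ∀ i < L, T.Beats Y (X i) ∨ T.Beats (X i) Y := by
    intro i hi
    rcases ha2 i hi with hA | hA <;> rcases hb2 i hi with hB | hB <;>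
      rcases hc2 i hi with hCc | hCc
    · left; intro s hs x hx
      rcases memY s hs with rfl | rfl | rfl
      exacts [hA x hx, hB x hx, hCc x hx]
    · exact (heavyAux i hi a c hca hA hCc).elim
    · exact (heavyAux i hi c b hbc hCc hB).elim
    · exact (heavyAux i hi a c hca hA hCc).elim
    · exact (heavyAux i hi b a hab hB hA).elim
    · exact (heavyAux i hi b a hab hB hA).elim
    · exact (heavyAux i hi c b hbc hCc hB).elim
    · right; intro x hx s hs
      rcases memY s hs with rfl | rfl | rfl
      exacts [hA x hx, hB x hx, hCc x hx]
  have hYtri : T.IsTriangle Y := ⟨a, b, c, rfl, hab, hbc, hca⟩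
  have hYdisj : ∀ i < L, Disjoint Y (X i) := by
    intro i hi
    rw [Set.disjoint_left]
    intro y hy
    rcases memY y hy with rfl | rfl | rfl
    exacts [ha1 i hi, hb1 i hi, hc1 i hi]
  have hex : ∃ n, n = L ∨ T.Beats Y (X n) := ⟨L, Or.inl rfl⟩
  set m := Nat.find hex with hmdef
  have hmL : m ≤ L := Nat.find_le (Or.inl rfl)
  have hmin : ∀ i < m, ¬(i = L ∨ T.Beats Y (X i)) := fun i h => Nat.find_min hex h
  have hspec : m = L ∨ T.Beats Y (X m) := Nat.find_spec hex
  set Z : ℕ → Set V := fun j => if j < m then X j else if j = m then Y else X (j - 1)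
    with hZdef
  have hZlt : ∀ j, j < m → Z j = X j := by intro j h; simp [hZdef, h]
  have hZm : Z m = Y := by simp [hZdef]
  have hZgt : ∀ j, m < j → Z j = X (j - 1) := by
    intro j h
    simp [hZdef, Nat.not_lt.2 h.le, h.ne']
  refine ⟨Z, ?_, ?_, ?_⟩
  · -- triangles
    intro j hj
    rcases lt_trichotomy j m with h | h | h
    · rw [hZlt j h]; exact htriX j (lt_of_lt_of_le h hmL)
    · rw [h, hZm]; exact hYtri
    · rw [hZgt j h]
      exact htriX (j - 1) (by omega)
  · -- disjointness
    intro i hi j hj hij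
    have key : ∀ k, k < L + 1 → k ≠ m → ∃ s, Z k = X s ∧ s < L ∧
        (k < m → s = k) ∧ (m < k → s = k - 1) := by
      intro k hk hkm
      rcases lt_or_gt_of_ne hkm with h | h
      · exact ⟨k, hZlt k h, by omega, fun _ => rfl, by omega⟩
      · exact ⟨k - 1, hZgt k h, by omega, by omega, fun _ => rfl⟩
    by_cases him : i = m
    · have hjm : j ≠ m := by omega
      obtain ⟨s, hZs, hsL, _, _⟩ := key j hj hjm
      rw [him, hZm, hZs]
      exact hYdisj s hsL
    · by_cases hjm : j = m
      · obtain ⟨s, hZs, hsL, _, _⟩ := key i hi him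
        rw [hjm, hZm, hZs]
        exact (hYdisj s hsL).symm
      · obtain ⟨s, hZs, hsL, hs1, hs2⟩ := key i hi him
        obtain ⟨t, hZt, htL, ht1, ht2⟩ := key j hj hjm
        rw [hZs, hZt]
        refine hdisjX s hsL t htL ?_
        rcases lt_or_gt_of_ne him with h | h <;> rcases lt_or_gt_of_ne hjm with h' | h' <;>
          omega
  · -- beats
    intro i hi
    rcases lt_trichotomy (i + 1) m with h | h | h
    · rw [hZlt i (by omega), hZlt (i + 1) h]
      exact hbeatsX i (by omega)
    · rw [hZlt i (by omega), h, hZm]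
      have hiL : i < L := by omega
      have : ¬ T.Beats Y (X i) := fun hb => hmin i (by omega) (Or.inr hb)
      rcases uni i hiL with h' | h'
      · exact absurd h' this
      · exact h'
    · rcases lt_trichotomy i m with h2 | h2 | h2
      · omega
      · rw [h2, hZm, hZgt (m + 1) (by omega), Nat.add_sub_cancel]
        rcases hspec with h' | h'
        · omega
        · exact h'
      · rw [hZgt i h2, hZgt (i + 1) h]
        have : i - 1 + 1 = i := by omega
        have hb := hbeatsX (i - 1) (by omega)
        rw [this] at hb
        simpa using hb
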